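/- Let D be a separable Banach space, I an index set, and S a finite subset of ℓ∞(I; D). For every ε > 0 there exist a countable subset J ⊆ I and a linear contraction f : ℓ∞(J; D) → ℓ∞(I; D) such that ‖f(p_J(x)) − x‖ ≤ ε simultaneously for all x ∈ S. -/
import Mathlib

/-- Let `D` be a separable Banach space, `I` an index set and `S` a finite
subset of `ℓ∞(I; D)` (bounded `D`-valued functions).  For every `ε > 0` there exist a
countable subset `J ⊆ I` and a linear contraction `f : ℓ∞(J; D) → ℓ∞(I; D)`
(contractivity expressed pointwise) such that `‖f (p_J x) − x‖_∞ ≤ ε` simultaneously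
for all `x ∈ S`. -/
theorem stmt_1 {D : Type*} [NormedAddCommGroup D] [NormedSpace ℝ D]
    [TopologicalSpace.SeparableSpace D]
    {I : Type*} (S : Finset (I → D)) (hS : ∀ x ∈ S, ∃ C : ℝ, ∀ i, ‖x i‖ ≤ C)
    {ε : ℝ} (hε : 0 < ε) :
    ∃ J : Set I, J.Countable ∧
      ∃ f : (J → D) →ₗ[ℝ] (I → D),
        (∀ (y : J → D) (C : ℝ), 0 ≤ C → (∀ j, ‖y j‖ ≤ C) → ∀ i, ‖f y i‖ ≤ C) ∧
        (∀ x ∈ S, ∀ i, ‖f (fun j : J => x j) i - x i‖ ≤ ε) := by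
  classical
  haveI : SecondCountableTopology D :=
    UniformSpace.secondCountable_of_separable D
  -- The evaluation map into the finite product
  set Φ : I → ({x // x ∈ S} → D) := fun i x => x.1 i with hΦ
  have hsep : TopologicalSpace.IsSeparable (Set.range Φ) :=
    TopologicalSpace.IsSeparable.of_separableSpace _
  obtain ⟨t, hts, htc, htd⟩ := hsep.exists_countable_dense_subset
  -- choose preimages for elements of t
  have hpre : ∀ y ∈ t, ∃ i : I, Φ i = y := fun y hy => hts hy
  choose g hg using hpre
  -- choose for each i an element of t at distance < ε
  have happrox : ∀ i : I, ∃ y ∈ t, dist (Φ i) y < ε := by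
    intro i
    have : Φ i ∈ closure t := htd (Set.mem_range_self i)
    exact Metric.mem_closure_iff.1 this ε hε
  choose y hyt hyd using happrox
  set J : Set I := {j | ∃ z, ∃ hz : z ∈ t, g z hz = j} with hJ
  have hJc : J.Countable := by
    have : J = ⋃ (z : t), {g z.1 z.2} := by
      ext j
      simp only [hJ, Set.mem_setOf_eq, Set.mem_iUnion, Set.mem_singleton_iff]
      constructor
      · rintro ⟨z, hz, rfl⟩; exact ⟨⟨z, hz⟩, rfl⟩
      · rintro ⟨⟨z, hz⟩, rfl⟩; exact ⟨z, hz, rfl⟩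
    rw [this]
    haveI : Countable t := htc.to_subtype
    exact Set.countable_iUnion fun z => Set.countable_singleton _
  -- the retraction
  set r : I → J := fun i => ⟨g (y i) (hyt i), ⟨y i, hyt i, rfl⟩⟩ with hr
  refine ⟨J, hJc, ?_⟩
  refine ⟨{ toFun := fun u i => u (r i),
            map_add' := fun u v => rfl,
            map_smul' := fun c u => rfl }, ?_, ?_⟩
  · intro u C _ hu i
    exact hu (r i)
  · intro x hx i
    have key : dist (Φ i) (Φ (r i).1) < ε := by
      have : Φ (r i).1 = y i := hg (y i) (hyt i)
      rw [this]; exact hyd i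
    have hcomp : dist (x i) (x (r i).1) ≤ dist (Φ i) (Φ (r i).1) :=
      dist_le_pi_dist (Φ i) (Φ (r i).1) ⟨x, hx⟩
    simp only [LinearMap.coe_mk, AddHom.coe_mk]
    rw [← dist_eq_norm, dist_comm]
    exact le_trans hcomp key.le
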